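/- Let p be a prime, e,n ≥ 2, and let u,v be primitive vectors in (Z/p^e)^n representing distinct points of P_{n,p^e}. Then the number of equivalence classes w ∈ P_{n,p^e} with ⟨u,w⟩ ≡ 0 and ⟨v,w⟩ ≡ 0 (mod p^e) equals (1/φ(p^e)) · ( p^{ν_p(ξ)+e(n-2)} − p^{min(ν_p(ξ),e−1)+(e−1)(n−2)} ), where ξ is the gcd of all 2x2 minors u_i v_j − u_j v_i and p^e, and φ is Euler's totient function. -/

import Mathlib

open scoped Classical

def Primitive {m n : ℕ} (u : Fin n → ZMod m) : Prop :=
  Nat.gcd (Finset.univ.gcd fun i => (u i).val) m = 1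

def assoc {m n : ℕ} (u v : Fin n → ZMod m) : Prop :=
  ∃ lam : (ZMod m)ˣ, v = fun i => (lam : ZMod m) * u i

def projSetoid (m n : ℕ) : Setoid {u : Fin n → ZMod m // Primitive u} where
  r u v := assoc u.1 v.1
  iseqv := by
    refine ⟨fun u => ⟨1, by simp⟩, ?_, ?_⟩
    · rintro u v ⟨l, h⟩
      refine ⟨l⁻¹, ?_⟩
      funext i
      simp [h, ← mul_assoc]
    · rintro u v w ⟨l, hl⟩ ⟨k, hk⟩
      refine ⟨k * l, ?_⟩
      funext i
      simp [hk, hl, mul_assoc]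

abbrev ProjPt (m n : ℕ) := Quotient (projSetoid m n)

noncomputable def theta (n m : ℕ) : ℕ := Nat.card (ProjPt m n)

def orthoPt (m n : ℕ) (U W : ProjPt m n) : Prop :=
  ∀ (u w : {x : Fin n → ZMod m // Primitive x}),
    Quotient.mk (projSetoid m n) u = U → Quotient.mk (projSetoid m n) w = W →
      ∑ i, u.1 i * w.1 i = 0

noncomputable def Bmat (m n : ℕ) : Matrix (ProjPt m n) (ProjPt m n) ℚ :=
  fun U V => (Nat.card {W : ProjPt m n // orthoPt m n U W ∧ orthoPt m n V W} : ℚ)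

noncomputable def nuVal (p e : ℕ) (x : ZMod (p^e)) : ℕ := if x = 0 then e else padicValNat p x.val

noncomputable def nuXi (p e : ℕ) {n : ℕ} (u v : Fin n → ZMod (p^e)) : ℕ :=
  sInf {k | ∃ i j : Fin n, k = nuVal p e (u i * v j - u j * v i)}

noncomputable def red (p e : ℕ) {n : ℕ} (u : Fin n → ZMod (p^e)) : Fin n → ZMod (p^(e-1)) :=
  fun i => ZMod.castHom (pow_dvd_pow p (Nat.sub_le e 1)) (ZMod (p^(e-1))) (u i)

noncomputable def eigMult {ι : Type*} [Fintype ι] (B : Matrix ι ι ℚ) (lam : ℚ) : ℕ :=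
  Module.finrank ℚ (LinearMap.ker (B.mulVecLin - lam • (LinearMap.id : (ι → ℚ) →ₗ[ℚ] (ι → ℚ))))


section basic
variable {p : ℕ} (hp : p.Prime) {f : ℕ} (hf : 1 ≤ f)
include hp

omit hf in
lemma nuVal_le (x : ZMod (p^f)) : nuVal p f x ≤ f := by
  haveI : Fact p.Prime := ⟨hp⟩
  unfold nuVal
  split
  · exact le_refl f
  · rename_i hx
    by_contra h
    push_neg at h
    have hvne : x.val ≠ 0 := by
      intro h0
      exact hx (by rwa [← ZMod.val_eq_zero])
    have : p ^ f ∣ x.val := by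
      rw [padicValNat_dvd_iff]
      exact Or.inr h.le
    have hlt : x.val < p ^ f := x.val_lt
    exact absurd (Nat.le_of_dvd (Nat.pos_of_ne_zero hvne) this) (not_le.mpr hlt)

omit hf in
lemma pow_dvd_iff_le_nuVal {k : ℕ} (hk : k ≤ f) (x : ZMod (p^f)) :
    (p : ZMod (p^f))^k ∣ x ↔ k ≤ nuVal p f x := by
  haveI : Fact p.Prime := ⟨hp⟩
  haveI : NeZero (p^f) := ⟨pow_ne_zero f hp.pos.ne'⟩
  constructor
  · rintro ⟨y, hy⟩
    unfold nuVal
    split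
    · exact hk
    · rename_i hx
      have hvne : x.val ≠ 0 := fun h0 => hx (by rwa [← ZMod.val_eq_zero])
      have hdvd : p ^ k ∣ x.val := by
        have h1 : ((x.val : ℕ) : ZMod (p^k)) = 0 := by
          calc ((x.val : ℕ) : ZMod (p^k))
              = ZMod.castHom (pow_dvd_pow p hk) (ZMod (p^k)) x := by
                rw [ZMod.castHom_apply, ZMod.natCast_val]
            _ = 0 := by
                rw [hy, map_mul, map_pow, map_natCast, ← Nat.cast_pow, ZMod.natCast_self,
                  zero_mul]
        exact (ZMod.natCast_eq_zero_iff _ _).mp h1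
      rw [padicValNat_dvd_iff] at hdvd
      exact hdvd.resolve_left hvne
  · intro h
    by_cases hx : x = 0
    · exact hx ▸ dvd_zero _
    · have hnu : nuVal p f x = padicValNat p x.val := if_neg hx
      rw [hnu] at h
      have hdvd : p ^ k ∣ x.val := (padicValNat_dvd_iff k x.val).mpr (Or.inr h)
      obtain ⟨s, hs⟩ := hdvd
      refine ⟨(s : ZMod (p^f)), ?_⟩
      have hxx : ((x.val : ℕ) : ZMod (p^f)) = x := by rw [ZMod.natCast_val, ZMod.cast_id]
      rw [← hxx, hs]
      push_cast
      ring

-- nuVal = f iff x = 0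
omit hf in
lemma nuVal_eq_top_iff (x : ZMod (p^f)) : nuVal p f x = f ↔ (x = 0 ∨ f = 0) := by
  constructor
  · intro h
    by_cases hx : x = 0
    · exact Or.inl hx
    · by_cases hf0 : f = 0
      · exact Or.inr hf0
      have : (p : ZMod (p^f))^f ∣ x := (pow_dvd_iff_le_nuVal hp le_rfl x).mpr h.ge
      have hz : (p : ZMod (p^f))^f = 0 := by
        rw [← Nat.cast_pow, ZMod.natCast_self]
      rw [hz, zero_dvd_iff] at this
      exact absurd this hx
  · rintro (hx | hf0)
    · simp [nuVal, hx]
    · have := nuVal_le hp (f := f) x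
      omega

end basic

lemma mem_zmultiples_of_dvd {N : ℕ} [NeZero N] {a y : ZMod N} (h : a ∣ y) :
    y ∈ AddSubgroup.zmultiples a := by
  obtain ⟨b, rfl⟩ := h
  refine AddSubgroup.mem_zmultiples_iff.mpr ⟨(b.val : ℤ), ?_⟩
  rw [zsmul_eq_mul]
  push_cast
  rw [ZMod.natCast_val, ZMod.cast_id, mul_comm]

lemma exp_aux (f μ : ℕ) (hμ : μ ≤ f) : ∀ a, 1 ≤ a → f * a = (f - μ) + (f * (a - 1) + μ) := by
  intro a ha
  obtain ⟨m, rfl⟩ := Nat.exists_eq_add_of_le ha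
  have h5 : 1 + m - 1 = m := by omega
  rw [h5, Nat.mul_add, Nat.mul_one]
  generalize f * m = t
  omega

lemma card_ker {p : ℕ} (hp : p.Prime) {f : ℕ} (hf : 1 ≤ f)
    {ι : Type} [Fintype ι] (c : ι → ZMod (p^f)) (μ : ℕ) (hμ : μ ≤ f)
    (h1 : ∀ i, (p : ZMod (p^f))^μ ∣ c i)
    (h2 : ∃ i, ∃ t : (ZMod (p^f))ˣ, c i = (p : ZMod (p^f))^μ * t) :
    Nat.card {x : ι → ZMod (p^f) // ∑ i, c i * x i = 0}
      = p ^ (f * (Fintype.card ι - 1) + μ) := by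
  haveI : NeZero (p^f) := ⟨pow_ne_zero f hp.pos.ne'⟩
  set H : (ι → ZMod (p^f)) →+ ZMod (p^f) :=
    { toFun := fun x => ∑ i, c i * x i
      map_zero' := by simp
      map_add' := by intro x y; simp [mul_add, Finset.sum_add_distrib] } with hH
  have hker : Nat.card {x : ι → ZMod (p^f) // ∑ i, c i * x i = 0} = Nat.card H.ker := by
    apply Nat.card_congr
    exact Equiv.subtypeEquivRight (fun x => by simp [hH, AddMonoidHom.mem_ker])
  have hrange : H.range = AddSubgroup.zmultiples ((p : ZMod (p^f))^μ) := by
    apply le_antisymm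
    · rintro y ⟨x, rfl⟩
      apply mem_zmultiples_of_dvd
      exact Finset.dvd_sum (fun i _ => dvd_mul_of_dvd_left (h1 i) _)
    · rw [AddSubgroup.zmultiples_le]
      obtain ⟨i, t, ht⟩ := h2
      refine ⟨Pi.single i ((t⁻¹ : (ZMod (p^f))ˣ) : ZMod (p^f)), ?_⟩
      simp only [hH, AddMonoidHom.coe_mk, ZeroHom.coe_mk]
      rw [Finset.sum_eq_single i]
      · rw [Pi.single_eq_same, ht, mul_assoc, Units.mul_inv, mul_one]
      · intro j _ hj
        rw [Pi.single_eq_of_ne hj, mul_zero]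
      · intro h; exact absurd (Finset.mem_univ i) h
  have hcr : Nat.card H.range = p ^ (f - μ) := by
    rw [hrange, Nat.card_zmultiples]
    have h3 : ((p : ZMod (p^f))^μ) = ((p^μ : ℕ) : ZMod (p^f)) := by push_cast; ring
    rw [h3, ZMod.addOrderOf_coe _ (NeZero.ne _), Nat.gcd_eq_right (pow_dvd_pow p hμ),
      ← Nat.pow_div hμ hp.pos]
  have hdom : Nat.card (ι → ZMod (p^f)) = p ^ (f * Fintype.card ι) := by
    rw [Nat.card_eq_fintype_card, Fintype.card_fun, ZMod.card, ← pow_mul, mul_comm]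
  have hquot : Nat.card ((ι → ZMod (p^f)) ⧸ H.ker) = p ^ (f - μ) := by
    rw [Nat.card_congr (QuotientAddGroup.quotientKerEquivRange H).toEquiv, hcr]
  have hsplit := AddSubgroup.card_eq_card_quotient_mul_card_addSubgroup H.ker
  rw [hdom, hquot] at hsplit
  have hm : 1 ≤ Fintype.card ι := Fintype.card_pos_iff.mpr ⟨h2.choose⟩
  have hexp := exp_aux f μ hμ _ hm
  rw [hexp, pow_add] at hsplit
  have hfin := Nat.eq_of_mul_eq_mul_left (Nat.pow_pos hp.pos) hsplit
  rw [hker, ← hfin]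


lemma sum_split {n : ℕ} (i0 : Fin n) {M : Type*} [AddCommMonoid M] (g : Fin n → M) :
    ∑ i, g i = g i0 + ∑ j : {i : Fin n // i ≠ i0}, g j.1 := by
  rw [← Finset.sum_subtype (Finset.univ.erase i0)
    (fun x => by simp [Finset.mem_erase]) g]
  exact (Finset.add_sum_erase _ g (Finset.mem_univ i0)).symm

lemma dvd_val_iff {p : ℕ} (hp : p.Prime) {f : ℕ} (hf : 1 ≤ f) (x : ZMod (p^f)) :
    p ∣ x.val ↔ (p : ZMod (p^f)) ∣ x := by
  haveI : NeZero (p^f) := ⟨pow_ne_zero f hp.pos.ne'⟩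
  constructor
  · rintro ⟨s, hs⟩
    refine ⟨(s : ZMod (p^f)), ?_⟩
    have hxx : ((x.val : ℕ) : ZMod (p^f)) = x := by rw [ZMod.natCast_val, ZMod.cast_id]
    rw [← hxx, hs]; push_cast; ring
  · rintro ⟨y, hy⟩
    have h1 : ((x.val : ℕ) : ZMod p) = 0 := by
      calc ((x.val : ℕ) : ZMod p)
          = ZMod.castHom (dvd_pow_self p (by omega : f ≠ 0)) (ZMod p) x := by
            rw [ZMod.castHom_apply, ZMod.natCast_val]
        _ = 0 := by rw [hy, map_mul, map_natCast, ZMod.natCast_self, zero_mul]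
    exact (ZMod.natCast_eq_zero_iff _ _).mp h1

lemma isUnit_iff_not_dvd {p : ℕ} (hp : p.Prime) {f : ℕ} (hf : 1 ≤ f) (x : ZMod (p^f)) :
    IsUnit x ↔ ¬ p ∣ x.val := by
  haveI : NeZero (p^f) := ⟨pow_ne_zero f hp.pos.ne'⟩
  have hxx : ((x.val : ℕ) : ZMod (p^f)) = x := by rw [ZMod.natCast_val, ZMod.cast_id]
  rw [show IsUnit x ↔ IsUnit ((x.val : ℕ) : ZMod (p^f)) from by rw [hxx]]
  rw [ZMod.isUnit_iff_coprime, Nat.coprime_pow_right_iff (by omega), Nat.coprime_comm]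
  exact hp.coprime_iff_not_dvd

lemma primitive_iff_exists_unit {p : ℕ} (hp : p.Prime) {f n : ℕ} (hf : 1 ≤ f)
    (u : Fin n → ZMod (p^f)) : Primitive u ↔ ∃ i, IsUnit (u i) := by
  unfold Primitive
  constructor
  · intro h
    by_contra hc
    push_neg at hc
    have hdvd : ∀ i, p ∣ (u i).val := by
      intro i
      have := hc i
      rw [isUnit_iff_not_dvd hp hf] at this
      exact not_not.mp this
    have h1 : p ∣ Nat.gcd (Finset.univ.gcd fun i => (u i).val) (p^f) :=
      Nat.dvd_gcd (Finset.dvd_gcd (fun i _ => hdvd i)) (dvd_pow_self p (by omega))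
    rw [h] at h1
    exact hp.one_lt.ne' (Nat.eq_one_of_dvd_one h1)
  · rintro ⟨i, hi⟩
    rw [isUnit_iff_not_dvd hp hf] at hi
    have h3 : Nat.gcd (Finset.univ.gcd fun i => (u i).val) (p^f) ∣ p ^ f :=
      Nat.gcd_dvd_right _ _
    obtain ⟨k, hk, he⟩ := (Nat.dvd_prime_pow hp).mp h3
    rcases Nat.eq_zero_or_pos k with hk0 | hkpos
    · rw [he, hk0, pow_zero]
    · exfalso
      have hpg : p ∣ Nat.gcd (Finset.univ.gcd fun i => (u i).val) (p^f) := by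
        rw [he]; exact dvd_pow_self p hkpos.ne'
      exact hi (hpg.trans ((Nat.gcd_dvd_left _ _).trans
        (Finset.gcd_dvd (Finset.mem_univ i))))


lemma exists_unit_of_nuVal {p : ℕ} (hp : p.Prime) {f : ℕ} {μ : ℕ} (hμ : μ < f)
    (x : ZMod (p^f)) (hx : nuVal p f x = μ) :
    ∃ t : (ZMod (p^f))ˣ, x = (p : ZMod (p^f))^μ * t := by
  haveI : Fact p.Prime := ⟨hp⟩
  haveI : NeZero (p^f) := ⟨pow_ne_zero f hp.pos.ne'⟩
  have hx0 : x ≠ 0 := by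
    intro h; rw [h] at hx; simp [nuVal] at hx; omega
  have hv : padicValNat p x.val = μ := by rwa [nuVal, if_neg hx0] at hx
  have hvne : x.val ≠ 0 := fun h0 => hx0 (by rwa [← ZMod.val_eq_zero])
  set s := x.val / p ^ μ with hs
  have hfac : p ^ μ * s = x.val := by
    rw [hs, ← hv]
    have := Nat.ordProj_mul_ordCompl_eq_self x.val p
    rwa [Nat.factorization_def _ hp] at this
  have hps : ¬ p ∣ s := by
    rw [hs, ← hv]
    have := Nat.not_dvd_ordCompl hp hvne
    rwa [Nat.factorization_def _ hp] at this
  have hus : IsUnit ((s : ℕ) : ZMod (p^f)) := by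
    rw [ZMod.isUnit_iff_coprime, Nat.coprime_pow_right_iff (by omega), Nat.coprime_comm]
    exact hp.coprime_iff_not_dvd.mpr hps
  refine ⟨hus.unit, ?_⟩
  have hxx : ((x.val : ℕ) : ZMod (p^f)) = x := by rw [ZMod.natCast_val, ZMod.cast_id]
  rw [← hxx, ← hfac, IsUnit.unit_spec]
  push_cast; ring


section twoforms
variable {p : ℕ} (hp : p.Prime) {f n : ℕ} (hf : 1 ≤ f) (hn : 2 ≤ n)
  (u v : Fin n → ZMod (p^f))

omit hp hf hn in
lemma nuXi_mem (hn1 : 1 ≤ n) : ∃ i j : Fin n,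
    nuXi p f u v = nuVal p f (u i * v j - u j * v i) := by
  have hne : {k | ∃ i j : Fin n, k = nuVal p f (u i * v j - u j * v i)}.Nonempty := by
    have i : Fin n := ⟨0, by omega⟩
    exact ⟨nuVal p f (u i * v i - u i * v i), i, i, rfl⟩
  exact Nat.sInf_mem hne

omit hp hf hn in
lemma nuXi_le (i j : Fin n) : nuXi p f u v ≤ nuVal p f (u i * v j - u j * v i) :=
  Nat.sInf_le ⟨i, j, rfl⟩

omit hf hn in
include hp in
lemma nuXi_le_f (hn1 : 1 ≤ n) : nuXi p f u v ≤ f := by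
  obtain ⟨i, j, h⟩ := nuXi_mem (p := p) (f := f) u v hn1
  rw [h]
  exact nuVal_le hp _

include hp hf hn in
lemma card_two_forms (i0 : Fin n) (h0 : IsUnit (u i0)) :
    Nat.card {w : Fin n → ZMod (p^f) // ∑ i, u i * w i = 0 ∧ ∑ i, v i * w i = 0}
      = p ^ (f * (n - 2) + nuXi p f u v) := by
  haveI : NeZero (p^f) := ⟨pow_ne_zero f hp.pos.ne'⟩
  obtain ⟨a, ha⟩ := h0
  set μ := nuXi p f u v with hμdef
  have hμf : μ ≤ f := nuXi_le_f hp u v (by omega)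
  have haa : (↑a : ZMod (p^f)) * ↑a⁻¹ = 1 := a.mul_inv
  -- divisibility of each pseudo-minor
  have h1 : ∀ i : Fin n, (p : ZMod (p^f))^μ ∣ (u i0 * v i - u i * v i0) := by
    intro i
    rw [pow_dvd_iff_le_nuVal hp hμf]
    exact nuXi_le u v i0 i
  -- pivot existence
  have h2 : ∃ i : Fin n, i ≠ i0 ∧
      ∃ t : (ZMod (p^f))ˣ, (u i0 * v i - u i * v i0) = (p : ZMod (p^f))^μ * t := by
    have hi1 : ∃ i1 : Fin n, i1 ≠ i0 := by
      haveI : Nontrivial (Fin n) := Fin.nontrivial_iff_two_le.mpr hn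
      exact exists_ne i0
    rcases eq_or_lt_of_le hμf with heq | hlt
    · -- μ = f : all minors vanish
      obtain ⟨i1, hi1⟩ := hi1
      have hmz : ∀ i j : Fin n, u i * v j - u j * v i = 0 := by
        intro i j
        have hle := nuXi_le (p := p) (f := f) u v i j
        have hle2 := nuVal_le hp (u i * v j - u j * v i)
        have hnv : nuVal p f (u i * v j - u j * v i) = f := by omega
        exact ((nuVal_eq_top_iff hp _).mp hnv).resolve_right (by omega)
      refine ⟨i1, hi1, 1, ?_⟩
      rw [hmz i0 i1, ← heq]
      have hz : (p : ZMod (p^f))^f = 0 := by rw [← Nat.cast_pow, ZMod.natCast_self]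
      rw [heq, hz, zero_mul]
    · by_contra hcon
      push_neg at hcon
      have hstep : ∀ i : Fin n, (p : ZMod (p^f))^(μ+1) ∣ (u i0 * v i - u i * v i0) := by
        intro i
        by_cases hii : i = i0
        · subst hii
          have hz : u i * v i - u i * v i = 0 := by ring
          rw [hz]; exact dvd_zero _
        · have hnem : nuVal p f (u i0 * v i - u i * v i0) ≠ μ := by
            intro hnv
            obtain ⟨t, ht⟩ := exists_unit_of_nuVal hp hlt _ hnv
            exact hcon i hii t ht
          have hge : μ ≤ nuVal p f (u i0 * v i - u i * v i0) := nuXi_le u v i0 i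
          rw [pow_dvd_iff_le_nuVal hp (by omega)]
          omega
      have hall : ∀ i j : Fin n, (p : ZMod (p^f))^(μ+1) ∣ (u i * v j - u j * v i) := by
        intro i j
        have hd : (p : ZMod (p^f))^(μ+1) ∣ (↑a) * (u i * v j - u j * v i) := by
          have hid : (↑a : ZMod (p^f)) * (u i * v j - u j * v i)
              = u i * (u i0 * v j - u j * v i0) - u j * (u i0 * v i - u i * v i0) := by
            rw [ha]; ring
          rw [hid]
          exact dvd_sub (Dvd.dvd.mul_left (hstep j) _) (Dvd.dvd.mul_left (hstep i) _)
        obtain ⟨y, hy⟩ := hd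
        refine ⟨(↑a⁻¹ : ZMod (p^f)) * y, ?_⟩
        have : (↑a⁻¹ : ZMod (p^f)) * ((↑a) * (u i * v j - u j * v i))
            = u i * v j - u j * v i := by
          rw [← mul_assoc, mul_comm (↑a⁻¹ : ZMod (p^f)) (↑a : ZMod (p^f)), haa, one_mul]
        rw [← this, hy]; ring
      obtain ⟨i, j, hij⟩ := nuXi_mem (p := p) (f := f) u v (by omega)
      have := (pow_dvd_iff_le_nuVal hp (show μ + 1 ≤ f by omega) _).mp (hall i j)
      omega
  -- the substitution equivalence
  have key : ∀ w : Fin n → ZMod (p^f),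
      (∑ i, u i * w i = 0 ∧ ∑ i, v i * w i = 0) →
      ∑ j : {i : Fin n // i ≠ i0}, (u i0 * v j.1 - u j.1 * v i0) * w j.1 = 0 := by
    intro w hw
    have hsu : u i0 * w i0 + ∑ j : {i : Fin n // i ≠ i0}, u j.1 * w j.1 = 0 := by
      rw [← sum_split i0 (fun i => u i * w i)]; exact hw.1
    have hsv : v i0 * w i0 + ∑ j : {i : Fin n // i ≠ i0}, v j.1 * w j.1 = 0 := by
      rw [← sum_split i0 (fun i => v i * w i)]; exact hw.2
    have h3 : ∑ j : {i : Fin n // i ≠ i0}, (u i0 * v j.1 - u j.1 * v i0) * w j.1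
        = u i0 * (∑ j : {i : Fin n // i ≠ i0}, v j.1 * w j.1)
          - v i0 * (∑ j : {i : Fin n // i ≠ i0}, u j.1 * w j.1) := by
      rw [Finset.mul_sum, Finset.mul_sum, ← Finset.sum_sub_distrib]
      exact Finset.sum_congr rfl (fun j _ => by ring)
    rw [h3]
    linear_combination u i0 * hsv - v i0 * hsu
  set ext : ({i : Fin n // i ≠ i0} → ZMod (p^f)) → (Fin n → ZMod (p^f)) :=
    fun x i => if h : i = i0
      then (↑a⁻¹ : ZMod (p^f)) * (- ∑ j : {i : Fin n // i ≠ i0}, u j.1 * x j)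
      else x ⟨i, h⟩ with hextdef
  have hext_i0 : ∀ x, ext x i0
      = (↑a⁻¹ : ZMod (p^f)) * (- ∑ j : {i : Fin n // i ≠ i0}, u j.1 * x j) := by
    intro x; rw [hextdef]; exact dif_pos rfl
  have hext_ne : ∀ x (j : {i : Fin n // i ≠ i0}), ext x j.1 = x j := by
    intro x j; rw [hextdef]; exact dif_neg j.2
  have hext_sum : ∀ (g : Fin n → ZMod (p^f)) x,
      ∑ j : {i : Fin n // i ≠ i0}, g j.1 * ext x j.1
      = ∑ j : {i : Fin n // i ≠ i0}, g j.1 * x j :=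
    fun g x => Finset.sum_congr rfl (fun j _ => by rw [hext_ne x j])
  have hextP : ∀ x : {i : Fin n // i ≠ i0} → ZMod (p^f),
      (∑ j : {i : Fin n // i ≠ i0}, (u i0 * v j.1 - u j.1 * v i0) * x j = 0) →
      (∑ i, u i * ext x i = 0 ∧ ∑ i, v i * ext x i = 0) := by
    intro x hx
    have h3 : ∑ j : {i : Fin n // i ≠ i0}, (u i0 * v j.1 - u j.1 * v i0) * x j
        = u i0 * (∑ j : {i : Fin n // i ≠ i0}, v j.1 * x j)
          - v i0 * (∑ j : {i : Fin n // i ≠ i0}, u j.1 * x j) := by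
      rw [Finset.mul_sum, Finset.mul_sum, ← Finset.sum_sub_distrib]
      exact Finset.sum_congr rfl (fun j _ => by ring)
    rw [h3] at hx
    rw [← ha] at hx
    constructor
    · rw [sum_split i0 (fun i => u i * ext x i), hext_sum u x, hext_i0 x, ← ha]
      linear_combination (- ∑ j : {i : Fin n // i ≠ i0}, u j.1 * x j) * haa
    · rw [sum_split i0 (fun i => v i * ext x i), hext_sum v x, hext_i0 x]
      linear_combination (↑a⁻¹ : ZMod (p^f)) * hx
        - (∑ j : {i : Fin n // i ≠ i0}, v j.1 * x j) * haa
  set E : {w : Fin n → ZMod (p^f) // ∑ i, u i * w i = 0 ∧ ∑ i, v i * w i = 0}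
      ≃ {x : {i : Fin n // i ≠ i0} → ZMod (p^f) //
          ∑ j, (u i0 * v j.1 - u j.1 * v i0) * x j = 0} :=
    { toFun := fun w => ⟨fun j => w.1 j.1, key w.1 w.2⟩
      invFun := fun x => ⟨ext x.1, hextP x.1 x.2⟩
      left_inv := by
        rintro ⟨w, hw1, hw2⟩
        apply Subtype.ext
        funext i
        show ext (fun j => w j.1) i = w i
        by_cases hii : i = i0
        · subst hii
          rw [hext_i0]
          have hsu : u i * w i + ∑ j : {k : Fin n // k ≠ i}, u j.1 * w j.1 = 0 := by
            rw [← sum_split i (fun k => u k * w k)]; exact hw1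
          rw [← ha] at hsu
          linear_combination (-(↑a⁻¹ : ZMod (p^f))) * hsu + w i * haa
        · exact hext_ne (fun j => w j.1) ⟨i, hii⟩
      right_inv := by
        rintro ⟨x, hx⟩
        apply Subtype.ext
        funext j
        exact hext_ne x j }
  have hcard := card_ker hp hf
    (fun j : {i : Fin n // i ≠ i0} => u i0 * v j.1 - u j.1 * v i0) μ hμf
    (fun j => h1 j.1)
    (by obtain ⟨i, hii, t, ht⟩ := h2; exact ⟨⟨i, hii⟩, t, ht⟩)
  rw [Nat.card_congr E, hcard]
  congr 2
  have hcard2 : Fintype.card {i : Fin n // i ≠ i0} = n - 1 := by simp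
  rw [hcard2, Nat.sub_sub]

end twoforms


section reduction
variable {p : ℕ} (hp : p.Prime) {e : ℕ} (he : 2 ≤ e)

include hp in
lemma cast_pow_dvd_iff {f k : ℕ} (hk : k ≤ f) (x : ZMod (p^f)) :
    (p : ZMod (p^f))^k ∣ x ↔ p^k ∣ x.val := by
  haveI : NeZero (p^f) := ⟨pow_ne_zero f hp.pos.ne'⟩
  haveI : NeZero (p^k) := ⟨pow_ne_zero k hp.pos.ne'⟩
  constructor
  · rintro ⟨y, hy⟩
    have h1 : ((x.val : ℕ) : ZMod (p^k)) = 0 := by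
      calc ((x.val : ℕ) : ZMod (p^k))
          = ZMod.castHom (pow_dvd_pow p hk) (ZMod (p^k)) x := by
            rw [ZMod.castHom_apply, ZMod.natCast_val]
        _ = 0 := by
            rw [hy, map_mul, map_pow, map_natCast, ← Nat.cast_pow, ZMod.natCast_self,
              zero_mul]
    exact (ZMod.natCast_eq_zero_iff _ _).mp h1
  · rintro ⟨s, hs⟩
    refine ⟨(s : ZMod (p^f)), ?_⟩
    have hxx : ((x.val : ℕ) : ZMod (p^f)) = x := by rw [ZMod.natCast_val, ZMod.cast_id]
    rw [← hxx, hs]; push_cast; ring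

include hp he in
lemma red_dvd_iff {k : ℕ} (hk : k ≤ e - 1) (z : ZMod (p^e)) :
    (p : ZMod (p^(e-1)))^k ∣ ZMod.castHom (pow_dvd_pow p (Nat.sub_le e 1))
      (ZMod (p^(e-1))) z ↔ (p : ZMod (p^e))^k ∣ z := by
  haveI : NeZero (p^e) := ⟨pow_ne_zero e hp.pos.ne'⟩
  haveI : NeZero (p^(e-1)) := ⟨pow_ne_zero _ hp.pos.ne'⟩
  rw [cast_pow_dvd_iff hp hk, cast_pow_dvd_iff hp (hk.trans (Nat.sub_le e 1))]
  have hcv : (ZMod.castHom (pow_dvd_pow p (Nat.sub_le e 1)) (ZMod (p^(e-1))) z).val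
      = z.val % p^(e-1) := by
    have h1 : ZMod.castHom (pow_dvd_pow p (Nat.sub_le e 1)) (ZMod (p^(e-1))) z
        = ((z.val : ℕ) : ZMod (p^(e-1))) := by
      rw [ZMod.castHom_apply, ZMod.natCast_val]
    rw [h1, ZMod.val_natCast]
  rw [hcv]
  exact Nat.dvd_mod_iff (pow_dvd_pow p hk)

include hp he in
lemma nuVal_red (z : ZMod (p^e)) :
    nuVal p (e-1) (ZMod.castHom (pow_dvd_pow p (Nat.sub_le e 1)) (ZMod (p^(e-1))) z)
      = min (nuVal p e z) (e-1) := by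
  set a := nuVal p (e-1) (ZMod.castHom (pow_dvd_pow p (Nat.sub_le e 1)) (ZMod (p^(e-1))) z)
    with hadef
  have ha1 : a ≤ e - 1 := nuVal_le hp _
  have hiff : ∀ k, k ≤ e - 1 → (k ≤ a ↔ k ≤ nuVal p e z) := by
    intro k hk
    rw [← pow_dvd_iff_le_nuVal hp hk, ← pow_dvd_iff_le_nuVal hp (hk.trans (Nat.sub_le e 1))]
    exact red_dvd_iff hp he hk z
  apply le_antisymm
  · exact le_min ((hiff a ha1).mp le_rfl) ha1
  · have hb : min (nuVal p e z) (e-1) ≤ e - 1 := min_le_right _ _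
    exact (hiff _ hb).mpr (min_le_left _ _)

include hp he in
lemma nuXi_red {n : ℕ} (hn : 1 ≤ n) (u v : Fin n → ZMod (p^e)) :
    nuXi p (e-1) (red p e u) (red p e v) = min (nuXi p e u v) (e-1) := by
  have hminor : ∀ i j : Fin n, red p e u i * red p e v j - red p e u j * red p e v i
      = ZMod.castHom (pow_dvd_pow p (Nat.sub_le e 1)) (ZMod (p^(e-1)))
        (u i * v j - u j * v i) := by
    intro i j
    simp only [red, map_sub, map_mul]
  have hnv : ∀ i j : Fin n, nuVal p (e-1)
      (red p e u i * red p e v j - red p e u j * red p e v i)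
      = min (nuVal p e (u i * v j - u j * v i)) (e-1) := by
    intro i j
    rw [hminor i j, nuVal_red hp he]
  apply le_antisymm
  · obtain ⟨i, j, hij⟩ := nuXi_mem (p := p) (f := e) u v hn
    have h1 := nuXi_le (p := p) (f := e - 1) (red p e u) (red p e v) i j
    rw [hnv i j, ← hij] at h1
    exact h1
  · obtain ⟨i, j, hij⟩ := nuXi_mem (p := p) (f := e - 1) (red p e u) (red p e v) hn
    rw [hij, hnv i j]
    exact min_le_min (nuXi_le u v i j) le_rfl

end reduction


lemma nuXi_lt_of_not_assoc {p : ℕ} (hp : p.Prime) {f n : ℕ} (hf : 1 ≤ f) (hn : 1 ≤ n)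
    (u v : Fin n → ZMod (p^f)) (hv : Primitive v) (i0 : Fin n) (h0 : IsUnit (u i0))
    (hne : ¬ assoc u v) : nuXi p f u v < f := by
  have hle : nuXi p f u v ≤ f := nuXi_le_f hp u v hn
  rcases lt_or_eq_of_le hle with h | h
  · exact h
  exfalso
  obtain ⟨a, ha⟩ := h0
  have hmz : ∀ i j : Fin n, u i * v j - u j * v i = 0 := by
    intro i j
    have hle1 := nuXi_le (p := p) (f := f) u v i j
    have hle2 := nuVal_le hp (u i * v j - u j * v i)
    have hnv : nuVal p f (u i * v j - u j * v i) = f := by omega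
    exact ((nuVal_eq_top_iff hp _).mp hnv).resolve_right (by omega)
  have haa : (↑a : ZMod (p^f)) * ↑a⁻¹ = 1 := a.mul_inv
  have hvi : ∀ i, v i = ((↑a⁻¹ : ZMod (p^f)) * v i0) * u i := by
    intro i
    have h1 := hmz i0 i
    rw [← ha] at h1
    linear_combination (↑a⁻¹ : ZMod (p^f)) * h1 - v i * haa
  have hvu : ∃ j, IsUnit (v j) := (primitive_iff_exists_unit hp hf v).mp hv
  obtain ⟨j, hj⟩ := hvu
  rw [hvi j] at hj
  have hlu : IsUnit ((↑a⁻¹ : ZMod (p^f)) * v i0) := isUnit_of_mul_isUnit_left hj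
  exact hne ⟨hlu.unit, funext fun i => by rw [IsUnit.unit_spec]; exact hvi i⟩

lemma card_subtype_split {α : Type} [Fintype α] (P Q : α → Prop) :
    Nat.card {x // P x} = Nat.card {x // P x ∧ Q x} + Nat.card {x // P x ∧ ¬ Q x} := by
  classical
  rw [Nat.card_eq_fintype_card, Nat.card_eq_fintype_card, Nat.card_eq_fintype_card,
    Fintype.card_subtype, Fintype.card_subtype, Fintype.card_subtype]
  have h1 : ∀ (R : α → Prop) [DecidablePred R],
      Finset.univ.filter (fun a => P a ∧ R a) = (Finset.univ.filter P).filter R := by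
    intro R _
    rw [Finset.filter_filter]
  rw [h1 Q, h1 (fun a => ¬ Q a)]
  exact (Finset.card_filter_add_card_filter_not (p := Q)).symm

section nonprim
variable {p : ℕ} (hp : p.Prime) {e : ℕ} (he : 2 ≤ e)

include hp he in
lemma pmul_eq_zero_iff (t : ZMod (p^e)) :
    (p : ZMod (p^e)) * t = 0 ↔
    ZMod.castHom (pow_dvd_pow p (Nat.sub_le e 1)) (ZMod (p^(e-1))) t = 0 := by
  haveI : NeZero (p^e) := ⟨pow_ne_zero e hp.pos.ne'⟩
  haveI : NeZero (p^(e-1)) := ⟨pow_ne_zero _ hp.pos.ne'⟩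
  have htt : ((t.val : ℕ) : ZMod (p^e)) = t := by rw [ZMod.natCast_val, ZMod.cast_id]
  have h1 : (p : ZMod (p^e)) * t = ((p * t.val : ℕ) : ZMod (p^e)) := by
    conv_lhs => rw [← htt]
    push_cast
    ring
  have h2 : ZMod.castHom (pow_dvd_pow p (Nat.sub_le e 1)) (ZMod (p^(e-1))) t
      = ((t.val : ℕ) : ZMod (p^(e-1))) := by
    rw [ZMod.castHom_apply, ZMod.natCast_val]
  rw [h1, h2, ZMod.natCast_eq_zero_iff, ZMod.natCast_eq_zero_iff]
  have hee : p^e = p * p^(e-1) := by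
    conv_lhs => rw [show e = 1 + (e-1) by omega]
    rw [pow_add, pow_one]
  generalize t.val = m
  rw [hee]
  exact Nat.mul_dvd_mul_iff_left hp.pos

include hp he in
lemma card_nonprim {n : ℕ} (u v : Fin n → ZMod (p^e)) :
    Nat.card {w : Fin n → ZMod (p^e) //
        (∑ i, u i * w i = 0 ∧ ∑ i, v i * w i = 0) ∧ ¬ Primitive w}
    = Nat.card {y : Fin n → ZMod (p^(e-1)) //
        ∑ i, red p e u i * y i = 0 ∧ ∑ i, red p e v i * y i = 0} := by
  haveI : NeZero (p^e) := ⟨pow_ne_zero e hp.pos.ne'⟩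
  haveI : NeZero (p^(e-1)) := ⟨pow_ne_zero _ hp.pos.ne'⟩
  have he1 : (1 : ℕ) ≤ e := by omega
  have hee : p^e = p * p^(e-1) := by
    conv_lhs => rw [show e = 1 + (e-1) by omega]
    rw [pow_add, pow_one]
  set π := ZMod.castHom (pow_dvd_pow p (Nat.sub_le e 1)) (ZMod (p^(e-1))) with hπ
  set L : ZMod (p^(e-1)) → ZMod (p^e) := fun y => ((y.val : ℕ) : ZMod (p^e)) with hLdef
  have hL : ∀ y : ZMod (p^(e-1)), π (L y) = y := by
    intro y
    rw [hLdef]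
    rw [map_natCast, ZMod.natCast_val, ZMod.cast_id]
  have hred : ∀ (g : Fin n → ZMod (p^e)) i, red p e g i = π (g i) := fun g i => rfl
  -- given p ∣ val pointwise, multiplication reconstructs
  have hmulrec : ∀ w : Fin n → ZMod (p^e), (∀ i, p ∣ (w i).val) →
      ∀ i, (p : ZMod (p^e)) * ((((w i).val / p : ℕ)) : ZMod (p^e)) = w i := by
    intro w hdvd i
    have hc : p * ((w i).val / p) = (w i).val := Nat.mul_div_cancel' (hdvd i)
    calc (p : ZMod (p^e)) * ((((w i).val / p : ℕ)) : ZMod (p^e))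
        = ((p * ((w i).val / p) : ℕ) : ZMod (p^e)) := by push_cast; ring
      _ = (((w i).val : ℕ) : ZMod (p^e)) := by rw [hc]
      _ = w i := by rw [ZMod.natCast_val, ZMod.cast_id]
  have hdvd_of_np : ∀ w : Fin n → ZMod (p^e), ¬ Primitive w → ∀ i, p ∣ (w i).val := by
    intro w hw i
    rw [primitive_iff_exists_unit hp he1] at hw
    push_neg at hw
    have := hw i
    rw [isUnit_iff_not_dvd hp he1, not_not] at this
    exact this
  have hfwd : ∀ y : Fin n → ZMod (p^(e-1)),
      (∑ i, red p e u i * y i = 0 ∧ ∑ i, red p e v i * y i = 0) →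
      ((∑ i, u i * ((p : ZMod (p^e)) * L (y i)) = 0
         ∧ ∑ i, v i * ((p : ZMod (p^e)) * L (y i)) = 0)
        ∧ ¬ Primitive (fun i => (p : ZMod (p^e)) * L (y i))) := by
    intro y hy
    have heq : ∀ g : Fin n → ZMod (p^e), (∑ i, red p e g i * y i = 0) →
        ∑ i, g i * ((p : ZMod (p^e)) * L (y i)) = 0 := by
      intro g hg
      have hs : ∑ i, g i * ((p : ZMod (p^e)) * L (y i))
          = (p : ZMod (p^e)) * ∑ i, g i * L (y i) := by
        rw [Finset.mul_sum]
        exact Finset.sum_congr rfl (fun i _ => by ring)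
      rw [hs]
      apply (pmul_eq_zero_iff hp he _).mpr
      have hπs : π (∑ i, g i * L (y i)) = ∑ i, red p e g i * y i := by
        rw [map_sum]
        exact Finset.sum_congr rfl (fun i _ => by rw [map_mul, hL, hred])
      rw [hπs]
      exact hg
    refine ⟨⟨heq u hy.1, heq v hy.2⟩, ?_⟩
    rw [primitive_iff_exists_unit hp he1]
    push_neg
    intro i
    rw [isUnit_iff_not_dvd hp he1, not_not, dvd_val_iff hp he1]
    exact Dvd.intro _ rfl
  have hbwd : ∀ w : Fin n → ZMod (p^e),
      ((∑ i, u i * w i = 0 ∧ ∑ i, v i * w i = 0) ∧ ¬ Primitive w) →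
      (∑ i, red p e u i * ((((w i).val / p : ℕ)) : ZMod (p^(e-1))) = 0
        ∧ ∑ i, red p e v i * ((((w i).val / p : ℕ)) : ZMod (p^(e-1))) = 0) := by
    intro w hw
    have hdvd := hdvd_of_np w hw.2
    have heq : ∀ g : Fin n → ZMod (p^e), (∑ i, g i * w i = 0) →
        ∑ i, red p e g i * ((((w i).val / p : ℕ)) : ZMod (p^(e-1))) = 0 := by
      intro g hg
      have hπs : ∑ i, red p e g i * ((((w i).val / p : ℕ)) : ZMod (p^(e-1)))
          = π (∑ i, g i * ((((w i).val / p : ℕ)) : ZMod (p^e))) := by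
        rw [map_sum]
        exact Finset.sum_congr rfl (fun i _ => by rw [map_mul, map_natCast, hred])
      rw [hπs]
      apply (pmul_eq_zero_iff hp he _).mp
      have hs : (p : ZMod (p^e)) * ∑ i, g i * ((((w i).val / p : ℕ)) : ZMod (p^e))
          = ∑ i, g i * ((p : ZMod (p^e)) * ((((w i).val / p : ℕ)) : ZMod (p^e))) := by
        rw [Finset.mul_sum]
        exact Finset.sum_congr rfl (fun i _ => by ring)
      rw [hs]
      calc ∑ i, g i * ((p : ZMod (p^e)) * ((((w i).val / p : ℕ)) : ZMod (p^e)))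
          = ∑ i, g i * w i := Finset.sum_congr rfl (fun i _ => by rw [hmulrec w hdvd i])
        _ = 0 := hg
    exact ⟨heq u hw.1.1, heq v hw.1.2⟩
  have hri : ∀ (y : Fin n → ZMod (p^(e-1))) (i : Fin n),
      (((((p : ZMod (p^e)) * L (y i)).val / p : ℕ)) : ZMod (p^(e-1))) = y i := by
    intro y i
    have h1 : ((p : ZMod (p^e)) * L (y i)) = ((p * (y i).val : ℕ) : ZMod (p^e)) := by
      rw [hLdef]; push_cast; ring
    have h2 : ((p * (y i).val : ℕ) : ZMod (p^e)).val = p * (y i).val := by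
      rw [ZMod.val_natCast, Nat.mod_eq_of_lt]
      calc p * (y i).val < p * p^(e-1) := mul_lt_mul_of_pos_left (y i).val_lt hp.pos
        _ = p^e := hee.symm
    rw [h1, h2, Nat.mul_div_cancel_left _ hp.pos, ZMod.natCast_val, ZMod.cast_id]
  have hLi : ∀ w : Fin n → ZMod (p^e), (∀ i, p ∣ (w i).val) → ∀ i,
      (p : ZMod (p^e)) * L (((((w i).val / p : ℕ)) : ZMod (p^(e-1)))) = w i := by
    intro w hdvd i
    have hslt : (w i).val / p < p^(e-1) := by
      rw [Nat.div_lt_iff_lt_mul hp.pos]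
      calc (w i).val < p^e := (w i).val_lt
        _ = p^(e-1) * p := by rw [hee, mul_comm]
    have hLs : L (((((w i).val / p : ℕ)) : ZMod (p^(e-1)))) = (((w i).val / p : ℕ) : ZMod (p^e)) := by
      rw [hLdef]
      simp only []
      rw [ZMod.val_natCast, Nat.mod_eq_of_lt hslt]
    rw [hLs]
    exact hmulrec w hdvd i
  exact Nat.card_congr (Equiv.symm
    { toFun := fun y => ⟨fun i => (p : ZMod (p^e)) * L (y.1 i), hfwd y.1 y.2⟩
      invFun := fun w => ⟨fun i => ((((w.1 i).val / p : ℕ)) : ZMod (p^(e-1))), hbwd w.1 w.2⟩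
      left_inv := fun y => Subtype.ext (funext fun i => hri y.1 i)
      right_inv := fun w => Subtype.ext (funext fun i =>
        hLi w.1 (hdvd_of_np w.1 w.2.2) i) })

end nonprim




lemma orthoPt_of_sol {m n : ℕ} (u w : {x : Fin n → ZMod m // Primitive x})
    (h : ∑ i, u.1 i * w.1 i = 0) :
    orthoPt m n (Quotient.mk (projSetoid m n) u) (Quotient.mk (projSetoid m n) w) := by
  intro u' w' hu' hw'
  obtain ⟨l, hl⟩ := Quotient.exact hu'
  obtain ⟨k, hk⟩ := Quotient.exact hw'
  have hlk : ((l * k : (ZMod m)ˣ) : ZMod m) * ∑ i, u'.1 i * w'.1 i = 0 := by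
    push_cast [Units.val_mul]
    have hc : (↑l * ↑k : ZMod m) * ∑ i, u'.1 i * w'.1 i
        = ∑ i, ((l : ZMod m) * u'.1 i) * ((k : ZMod m) * w'.1 i) := by
      rw [Finset.mul_sum]
      exact Finset.sum_congr rfl fun i _ => by ring
    rw [hc]
    calc ∑ i, ((l : ZMod m) * u'.1 i) * ((k : ZMod m) * w'.1 i)
        = ∑ i, u.1 i * w.1 i := by
          refine Finset.sum_congr rfl fun i _ => ?_
          rw [hl, hk]
      _ = 0 := h
  exact (Units.mul_right_eq_zero (u := l * k)).mp hlk

lemma card_prim_sol {p e n : ℕ} (hp : p.Prime) (he : 1 ≤ e)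
    (u v : Fin n → ZMod (p^e)) (hu : Primitive u) (hv : Primitive v) :
    Nat.card {w : Fin n → ZMod (p^e) //
        (∑ i, u i * w i = 0 ∧ ∑ i, v i * w i = 0) ∧ Primitive w}
      = Nat.totient (p^e) *
        Nat.card {W : ProjPt (p^e) n //
          orthoPt (p^e) n (Quotient.mk (projSetoid (p^e) n) ⟨u, hu⟩) W ∧
          orthoPt (p^e) n (Quotient.mk (projSetoid (p^e) n) ⟨v, hv⟩) W} := by
  haveI : NeZero (p^e) := ⟨pow_ne_zero e hp.pos.ne'⟩
  have hscale : ∀ (lam : (ZMod (p^e))ˣ) (x : Fin n → ZMod (p^e)), Primitive x →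
      Primitive (fun i => (lam : ZMod (p^e)) * x i) := by
    intro lam x hx
    rw [primitive_iff_exists_unit hp he] at hx ⊢
    obtain ⟨j, hj⟩ := hx
    exact ⟨j, (Units.isUnit lam).mul hj⟩
  have hcancel : ∀ (x : Fin n → ZMod (p^e)), Primitive x →
      ∀ lam mu : (ZMod (p^e))ˣ,
        (fun i => (lam : ZMod (p^e)) * x i) = (fun i => (mu : ZMod (p^e)) * x i) →
        lam = mu := by
    intro x hx lam mu h
    rw [primitive_iff_exists_unit hp he] at hx
    obtain ⟨j, hj⟩ := hx
    exact Units.ext (hj.mul_right_cancel (congrFun h j))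
  have hsolscale : ∀ (g x : Fin n → ZMod (p^e)) (lam : (ZMod (p^e))ˣ),
      ∑ i, g i * x i = 0 → ∑ i, g i * ((lam : ZMod (p^e)) * x i) = 0 := by
    intro g x lam hx
    have hc : ∑ i, g i * ((lam : ZMod (p^e)) * x i)
        = (lam : ZMod (p^e)) * ∑ i, g i * x i := by
      rw [Finset.mul_sum]; exact Finset.sum_congr rfl fun i _ => by ring
    rw [hc, hx, mul_zero]
  -- forward membership
  have hfwd : ∀ (W : {W : ProjPt (p^e) n //
          orthoPt (p^e) n (Quotient.mk (projSetoid (p^e) n) ⟨u, hu⟩) W ∧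
          orthoPt (p^e) n (Quotient.mk (projSetoid (p^e) n) ⟨v, hv⟩) W})
      (lam : (ZMod (p^e))ˣ),
      (∑ i, u i * ((lam : ZMod (p^e)) * (W.1.out).1 i) = 0
        ∧ ∑ i, v i * ((lam : ZMod (p^e)) * (W.1.out).1 i) = 0)
      ∧ Primitive (fun i => (lam : ZMod (p^e)) * (W.1.out).1 i) := by
    intro W lam
    have hu0 : ∑ i, u i * (W.1.out).1 i = 0 := W.2.1 ⟨u, hu⟩ W.1.out rfl (Quotient.out_eq W.1)
    have hv0 : ∑ i, v i * (W.1.out).1 i = 0 := W.2.2 ⟨v, hv⟩ W.1.out rfl (Quotient.out_eq W.1)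
    exact ⟨⟨hsolscale u _ lam hu0, hsolscale v _ lam hv0⟩, hscale lam _ (W.1.out).2⟩
  -- choice of scaling factor
  have hrelex : ∀ (w : Fin n → ZMod (p^e)) (hw : Primitive w),
      ∃ lam : (ZMod (p^e))ˣ, w = fun i =>
        (lam : ZMod (p^e)) * ((Quotient.mk (projSetoid (p^e) n) ⟨w, hw⟩).out).1 i := by
    intro w hw
    obtain ⟨lam, hl⟩ :=
      Quotient.exact (Quotient.out_eq (Quotient.mk (projSetoid (p^e) n) ⟨w, hw⟩))
    exact ⟨lam, hl⟩
  set E : {W : ProjPt (p^e) n //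
          orthoPt (p^e) n (Quotient.mk (projSetoid (p^e) n) ⟨u, hu⟩) W ∧
          orthoPt (p^e) n (Quotient.mk (projSetoid (p^e) n) ⟨v, hv⟩) W} × (ZMod (p^e))ˣ
      ≃ {w : Fin n → ZMod (p^e) //
        (∑ i, u i * w i = 0 ∧ ∑ i, v i * w i = 0) ∧ Primitive w} :=
    { toFun := fun Wl => ⟨fun i => (Wl.2 : ZMod (p^e)) * (Wl.1.1.out).1 i, hfwd Wl.1 Wl.2⟩
      invFun := fun x => ⟨⟨Quotient.mk (projSetoid (p^e) n) ⟨x.1, x.2.2⟩,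
          ⟨orthoPt_of_sol ⟨u, hu⟩ ⟨x.1, x.2.2⟩ x.2.1.1,
           orthoPt_of_sol ⟨v, hv⟩ ⟨x.1, x.2.2⟩ x.2.1.2⟩⟩,
          Classical.choose (hrelex x.1 x.2.2)⟩
      left_inv := by
        rintro ⟨W, lam⟩
        have hprim : Primitive (fun i => (lam : ZMod (p^e)) * (W.1.out).1 i) :=
          (hfwd W lam).2
        have hrel : (projSetoid (p^e) n).r W.1.out
            ⟨fun i => (lam : ZMod (p^e)) * (W.1.out).1 i, hprim⟩ := ⟨lam, rfl⟩
        have hmkeq : Quotient.mk (projSetoid (p^e) n)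
            ⟨fun i => (lam : ZMod (p^e)) * (W.1.out).1 i, hprim⟩ = W.1 :=
          ((Quotient.sound hrel).symm).trans (Quotient.out_eq W.1)
        have houteq := congrArg Quotient.out hmkeq
        have hspec := Classical.choose_spec (hrelex _ hprim)
        have h2 : (fun i => (lam : ZMod (p^e)) *
              ((Quotient.mk (projSetoid (p^e) n)
                ⟨fun i => (lam : ZMod (p^e)) * (W.1.out).1 i, hprim⟩).out).1 i)
            = (fun i => (lam : ZMod (p^e)) * (W.1.out).1 i) := by rw [houteq]
        have hch : Classical.choose (hrelex _ hprim) = lam :=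
          hcancel _ ((Quotient.mk (projSetoid (p^e) n)
              ⟨fun i => (lam : ZMod (p^e)) * (W.1.out).1 i, hprim⟩).out).2 _ lam
            (hspec.symm.trans h2.symm)
        refine Prod.ext (Subtype.ext ?_) ?_
        · exact hmkeq
        · exact hch
      right_inv := by
        rintro ⟨w, hw⟩
        exact Subtype.ext (Classical.choose_spec (hrelex w hw.2)).symm }
  rw [Nat.card_congr E.symm, Nat.card_prod, mul_comm]
  congr 1
  rw [Nat.card_eq_fintype_card]
  exact ZMod.card_units_eq_totient _


theorem stmt8 (p e n : ℕ) (hp : p.Prime) (he : 2 ≤ e) (hn : 2 ≤ n)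
    (u v : Fin n → ZMod (p^e)) (hu : Primitive u) (hv : Primitive v)
    (hne : ¬ assoc u v) :
    Nat.totient (p^e) *
      Nat.card {W : ProjPt (p^e) n //
        orthoPt (p^e) n (Quotient.mk (projSetoid (p^e) n) ⟨u, hu⟩) W ∧
        orthoPt (p^e) n (Quotient.mk (projSetoid (p^e) n) ⟨v, hv⟩) W}
      = p^(nuXi p e u v + e*(n-2)) - p^(min (nuXi p e u v) (e-1) + (e-1)*(n-2)) := by
  haveI : NeZero (p^e) := ⟨pow_ne_zero e hp.pos.ne'⟩
  have he1 : (1:ℕ) ≤ e := by omega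
  obtain ⟨i0, h0⟩ := (primitive_iff_exists_unit hp he1 u).mp hu
  have hmult : nuXi p e u v < e :=
    nuXi_lt_of_not_assoc hp he1 (by omega) u v hv i0 h0 hne
  have hall := card_two_forms hp he1 hn u v i0 h0
  have hsplit := card_subtype_split (α := Fin n → ZMod (p^e))
    (fun w => ∑ i, u i * w i = 0 ∧ ∑ i, v i * w i = 0) Primitive
  have hprimcnt := card_prim_sol hp he1 u v hu hv
  have hnonprim := card_nonprim hp he u v
  have hredunit : IsUnit (red p e u i0) :=
    h0.map (ZMod.castHom (pow_dvd_pow p (Nat.sub_le e 1)) (ZMod (p^(e-1))))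
  have hredforms := card_two_forms hp (Nat.le_sub_one_of_lt he) hn
    (red p e u) (red p e v) i0 hredunit
  rw [nuXi_red hp he (le_trans one_le_two hn) u v] at hredforms
  have hmin : min (nuXi p e u v) (e-1) = nuXi p e u v := min_eq_left (Nat.le_sub_one_of_lt hmult)
  rw [hmin] at hredforms ⊢
  rw [← hprimcnt]
  have hC : Nat.card {w : Fin n → ZMod (p^e) //
        (∑ i, u i * w i = 0 ∧ ∑ i, v i * w i = 0) ∧ ¬ Primitive w}
      = p^((e-1)*(n-2) + nuXi p e u v) := hnonprim.trans hredforms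
  have hA : Nat.card {w : Fin n → ZMod (p^e) //
        (∑ i, u i * w i = 0 ∧ ∑ i, v i * w i = 0) ∧ Primitive w}
      = Nat.card {w : Fin n → ZMod (p^e) //
          ∑ i, u i * w i = 0 ∧ ∑ i, v i * w i = 0}
        - Nat.card {w : Fin n → ZMod (p^e) //
        (∑ i, u i * w i = 0 ∧ ∑ i, v i * w i = 0) ∧ ¬ Primitive w} :=
    Nat.eq_sub_of_add_eq hsplit.symm
  rw [hA, hall, hC, Nat.add_comm (e*(n-2)) (nuXi p e u v),
    Nat.add_comm ((e-1)*(n-2)) (nuXi p e u v)]
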